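/- Let γ ∈ ℝ with γ ≠ −8. There do not exist real numbers c₁, c₂ ∈ [−1,1] \ {0} with (|c₁|, |c₂|) ≠ (1,1) such that both 8(c₁ + c₂) − 4(1/c₁ + 1/c₂) = 8 + γ and −2(c₁ + c₂) + 1/c₁ + 1/c₂ + 1/c₁³ + 1/c₂³ = 0 hold. -/

import Mathlib

lemma stmt14_aux (c : ℝ) (h1 : -1 ≤ c) (h2 : c ≤ 1) :
    0 ≤ (1 - c ^ 2) * (2 * c ^ 2 + 1) :=
  mul_nonneg (by nlinarith) (by positivity)

lemma stmt14_sq (c : ℝ) (h0 : (1 - c ^ 2) * (2 * c ^ 2 + 1) = 0) : c ^ 2 = 1 := by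
  have hpos : (0 : ℝ) < 2 * c ^ 2 + 1 := by positivity
  have := mul_eq_zero.1 h0
  rcases this with h | h
  · linarith
  · linarith

/-- For `γ ≠ −8` there are no `c₁, c₂ ∈ [−1,1] \ {0}` with `(|c₁|, |c₂|) ≠ (1,1)`
solving simultaneously `8(c₁+c₂) − 4(1/c₁+1/c₂) = 8 + γ` and
`−2(c₁+c₂) + 1/c₁ + 1/c₂ + 1/c₁³ + 1/c₂³ = 0`: this is the key nonvanishing claim
(the cubic coefficient `a₁` does not vanish on `E_γ`). -/
theorem stmt14 (γ : ℝ) (hγ : γ ≠ -8) :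
    ¬ ∃ c₁ c₂ : ℝ, c₁ ∈ Set.Icc (-1 : ℝ) 1 ∧ c₂ ∈ Set.Icc (-1 : ℝ) 1 ∧
      c₁ ≠ 0 ∧ c₂ ≠ 0 ∧ (|c₁|, |c₂|) ≠ (1, 1) ∧
      8 * (c₁ + c₂) - 4 * (1 / c₁ + 1 / c₂) = 8 + γ ∧
      -2 * (c₁ + c₂) + 1 / c₁ + 1 / c₂ + 1 / c₁ ^ 3 + 1 / c₂ ^ 3 = 0 := by
  rintro ⟨c₁, c₂, ⟨h1l, h1r⟩, ⟨h2l, h2r⟩, hc₁, hc₂, hpair, heq1, heq2⟩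
  have hcc : c₁ * c₂ ≠ 0 := mul_ne_zero hc₁ hc₂
  have E : c₂ ^ 3 * ((1 - c₁ ^ 2) * (2 * c₁ ^ 2 + 1))
      + c₁ ^ 3 * ((1 - c₂ ^ 2) * (2 * c₂ ^ 2 + 1)) = 0 := by
    have h := heq2
    field_simp at h
    apply mul_left_cancel₀ hcc
    linear_combination (c₁ * c₂) * h
  have hA : 0 ≤ (1 - c₁ ^ 2) * (2 * c₁ ^ 2 + 1) := stmt14_aux c₁ h1l h1r
  have hB : 0 ≤ (1 - c₂ ^ 2) * (2 * c₂ ^ 2 + 1) := stmt14_aux c₂ h2l h2r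
  rcases hc₁.lt_or_gt with h1n | h1p <;> rcases hc₂.lt_or_gt with h2n | h2p
  · -- both negative: c₁ = c₂ = -1
    have hc13 : c₁ ^ 3 < 0 := Odd.pow_neg ⟨1, by norm_num⟩ h1n
    have hc23 : c₂ ^ 3 < 0 := Odd.pow_neg ⟨1, by norm_num⟩ h2n
    have t1 : c₂ ^ 3 * ((1 - c₁ ^ 2) * (2 * c₁ ^ 2 + 1)) ≤ 0 :=
      mul_nonpos_of_nonpos_of_nonneg hc23.le hA
    have t2 : c₁ ^ 3 * ((1 - c₂ ^ 2) * (2 * c₂ ^ 2 + 1)) ≤ 0 :=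
      mul_nonpos_of_nonpos_of_nonneg hc13.le hB
    have hA0 : (1 - c₁ ^ 2) * (2 * c₁ ^ 2 + 1) = 0 := by
      rcases mul_eq_zero.1 (by linarith : c₂ ^ 3 * ((1 - c₁ ^ 2) * (2 * c₁ ^ 2 + 1)) = 0) with h | h
      · exact absurd h hc23.ne
      · exact h
    have hB0 : (1 - c₂ ^ 2) * (2 * c₂ ^ 2 + 1) = 0 := by
      rcases mul_eq_zero.1 (by linarith : c₁ ^ 3 * ((1 - c₂ ^ 2) * (2 * c₂ ^ 2 + 1)) = 0) with h | h
      · exact absurd h hc13.ne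
      · exact h
    have e1 : c₁ = -1 := by
      have := stmt14_sq c₁ hA0
      have hf : (c₁ - 1) * (c₁ + 1) = 0 := by linear_combination this
      rcases mul_eq_zero.1 hf with h | h
      · linarith
      · linarith
    have e2 : c₂ = -1 := by
      have := stmt14_sq c₂ hB0
      have hf : (c₂ - 1) * (c₂ + 1) = 0 := by linear_combination this
      rcases mul_eq_zero.1 hf with h | h
      · linarith
      · linarith
    exact hpair (by rw [e1, e2]; norm_num)
  · -- mixed: c₁ < 0 < c₂
    have hF : 0 < -2 * c₁ ^ 3 * c₂ ^ 3 + c₁ ^ 2 * c₂ ^ 2 + c₁ ^ 2 - c₁ * c₂ + c₂ ^ 2 := by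
      have h1 : c₁ ^ 3 * c₂ ^ 3 < 0 :=
        mul_neg_of_neg_of_pos (Odd.pow_neg ⟨1, by norm_num⟩ h1n) (by positivity)
      have h2 : c₁ * c₂ < 0 := mul_neg_of_neg_of_pos h1n h2p
      nlinarith [sq_nonneg c₁, sq_nonneg c₂, sq_nonneg (c₁ * c₂)]
    have hs : c₁ + c₂ = 0 := by
      have hE2 : (c₁ + c₂) * (-2 * c₁ ^ 3 * c₂ ^ 3 + c₁ ^ 2 * c₂ ^ 2 + c₁ ^ 2 - c₁ * c₂ + c₂ ^ 2) = 0 := by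
        linear_combination E
      rcases mul_eq_zero.1 hE2 with h | h
      · exact h
      · linarith
    have hc : c₂ = -c₁ := by linarith
    subst hc
    rw [one_div, one_div, inv_neg] at heq1
    exact hγ (by linarith)
  · -- mixed: c₂ < 0 < c₁
    have hF : 0 < -2 * c₁ ^ 3 * c₂ ^ 3 + c₁ ^ 2 * c₂ ^ 2 + c₁ ^ 2 - c₁ * c₂ + c₂ ^ 2 := by
      have h1 : c₁ ^ 3 * c₂ ^ 3 < 0 :=
        mul_neg_of_pos_of_neg (by positivity) (Odd.pow_neg ⟨1, by norm_num⟩ h2n)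
      have h2 : c₁ * c₂ < 0 := mul_neg_of_pos_of_neg h1p h2n
      nlinarith [sq_nonneg c₁, sq_nonneg c₂, sq_nonneg (c₁ * c₂)]
    have hs : c₁ + c₂ = 0 := by
      have hE2 : (c₁ + c₂) * (-2 * c₁ ^ 3 * c₂ ^ 3 + c₁ ^ 2 * c₂ ^ 2 + c₁ ^ 2 - c₁ * c₂ + c₂ ^ 2) = 0 := by
        linear_combination E
      rcases mul_eq_zero.1 hE2 with h | h
      · exact h
      · linarith
    have hc : c₂ = -c₁ := by linarith
    subst hc
    rw [one_div, one_div, inv_neg] at heq1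
    exact hγ (by linarith)
  · -- both positive: c₁ = c₂ = 1
    have hc13 : (0 : ℝ) < c₁ ^ 3 := by positivity
    have hc23 : (0 : ℝ) < c₂ ^ 3 := by positivity
    have t1 : 0 ≤ c₂ ^ 3 * ((1 - c₁ ^ 2) * (2 * c₁ ^ 2 + 1)) := mul_nonneg hc23.le hA
    have t2 : 0 ≤ c₁ ^ 3 * ((1 - c₂ ^ 2) * (2 * c₂ ^ 2 + 1)) := mul_nonneg hc13.le hB
    have hA0 : (1 - c₁ ^ 2) * (2 * c₁ ^ 2 + 1) = 0 := by
      rcases mul_eq_zero.1 (by linarith : c₂ ^ 3 * ((1 - c₁ ^ 2) * (2 * c₁ ^ 2 + 1)) = 0) with h | h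
      · exact absurd h hc23.ne'
      · exact h
    have hB0 : (1 - c₂ ^ 2) * (2 * c₂ ^ 2 + 1) = 0 := by
      rcases mul_eq_zero.1 (by linarith : c₁ ^ 3 * ((1 - c₂ ^ 2) * (2 * c₂ ^ 2 + 1)) = 0) with h | h
      · exact absurd h hc13.ne'
      · exact h
    have e1 : c₁ = 1 := by
      have := stmt14_sq c₁ hA0
      have hf : (c₁ - 1) * (c₁ + 1) = 0 := by linear_combination this
      rcases mul_eq_zero.1 hf with h | h
      · linarith
      · linarith
    have e2 : c₂ = 1 := by
      have := stmt14_sq c₂ hB0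
      have hf : (c₂ - 1) * (c₂ + 1) = 0 := by linear_combination this
      rcases mul_eq_zero.1 hf with h | h
      · linarith
      · linarith
    exact hpair (by rw [e1, e2]; norm_num)
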